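/- For every a ∈ ℝ and every i ∈ {1,…,2n}, one has (x_i(a)·y_{i+n}(a)) · R · (x_i(a)·y_{i+n}(a))ᵀ = R, where the index i+n is taken modulo 2n with representative in {1,…,2n}. -/

import Mathlib

open Matrix

/-- The Gram matrix of the form `R(x,y) = Σ_{i=1}^n (−1)^{i−1}(x_i y_{n+i} − x_{n+i} y_i)`,
with `0`-based indices. -/
def Rmat (n : ℕ) : Matrix (Fin (2*n)) (Fin (2*n)) ℝ := fun i j =>
  if (j : ℕ) = (i : ℕ) + n then (-1 : ℝ) ^ (i : ℕ)
  else if (i : ℕ) = (j : ℕ) + n then -(-1 : ℝ) ^ (j : ℕ)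
  else 0

/-- Rotation of indices by `n` modulo `2n`. -/
def rotIdx (n : ℕ) (i : Fin (2*n)) : Fin (2*n) :=
  ⟨((i : ℕ) + n) % (2*n), Nat.mod_lt _ (Nat.lt_of_le_of_lt (Nat.zero_le _) i.isLt)⟩

/-- `x_i(a)` (0-based index `i`): the identity matrix with an extra entry `a` in
position `(i, i+1)` for `i < 2n−1`, and with extra entry `(−1)^{n−1}a` in position
`(2n−1, 0)` for `i = 2n−1`. -/
def xMat (n : ℕ) (i : Fin (2*n)) (a : ℝ) : Matrix (Fin (2*n)) (Fin (2*n)) ℝ :=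
  fun r c =>
    (if r = c then 1 else 0) +
    (if (i : ℕ) + 1 < 2*n then
      (if (r : ℕ) = (i : ℕ) ∧ (c : ℕ) = (i : ℕ) + 1 then a else 0)
    else
      (if (r : ℕ) = (i : ℕ) ∧ (c : ℕ) = 0 then (-1 : ℝ) ^ (n - 1) * a else 0))

/-- `y_i(a)` (0-based index `i`): the identity matrix with an extra entry `a` in
position `(i+1, i)` for `i < 2n−1`, and with extra entry `(−1)^{n−1}a` in position
`(0, 2n−1)` for `i = 2n−1`. -/
def yMat (n : ℕ) (i : Fin (2*n)) (a : ℝ) : Matrix (Fin (2*n)) (Fin (2*n)) ℝ :=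
  fun r c =>
    (if r = c then 1 else 0) +
    (if (i : ℕ) + 1 < 2*n then
      (if (r : ℕ) = (i : ℕ) + 1 ∧ (c : ℕ) = (i : ℕ) then a else 0)
    else
      (if (r : ℕ) = 0 ∧ (c : ℕ) = (i : ℕ) then (-1 : ℝ) ^ (n - 1) * a else 0))

/-- successor index mod 2n -/
def sIdx (n : ℕ) (i : Fin (2*n)) : Fin (2*n) :=
  ⟨((i : ℕ) + 1) % (2*n), Nat.mod_lt _ (Nat.lt_of_le_of_lt (Nat.zero_le _) i.isLt)⟩

def epsc (n : ℕ) (i : Fin (2*n)) : ℝ := if (i : ℕ) + 1 < 2*n then 1 else (-1)^(n-1)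

def rhoc (n : ℕ) (q : Fin (2*n)) : ℝ :=
  if (q : ℕ) < n then (-1)^(q:ℕ) else -(-1)^((q:ℕ)-n)

lemma mod2n {n x : ℕ} (h : x < 2*(2*n)) : x % (2*n) = if x < 2*n then x else x - 2*n := by
  split
  · exact Nat.mod_eq_of_lt ‹_›
  · rw [Nat.mod_eq_sub_mod (by omega), Nat.mod_eq_of_lt (by omega)]

lemma xMat_eq (n : ℕ) (i : Fin (2*n)) (a : ℝ) :
    xMat n i a = 1 + single i (sIdx n i) (epsc n i * a) := by
  ext r c
  simp only [xMat, Matrix.add_apply, Matrix.one_apply, single, of_apply, epsc, sIdx]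
  have hi := i.isLt
  by_cases h : (i : ℕ) + 1 < 2*n
  · simp only [h, if_true]
    congr 1
    have : ((i:ℕ)+1) % (2*n) = (i:ℕ)+1 := Nat.mod_eq_of_lt h
    by_cases h1 : (r:ℕ) = (i:ℕ) ∧ (c:ℕ) = (i:ℕ)+1
    · rw [if_pos h1, if_pos ⟨(Fin.ext h1.1.symm), (Fin.ext (by simp [this, h1.2]))⟩, one_mul]
    · rw [if_neg h1, if_neg]
      intro ⟨h2, h3⟩
      exact h1 ⟨by rw [← h2], by rw [← h3]; simp [this]⟩
  · simp only [h, if_false]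
    congr 1
    have h2n : (i:ℕ) + 1 = 2*n := by omega
    have : ((i:ℕ)+1) % (2*n) = 0 := by rw [h2n]; simp
    by_cases h1 : (r:ℕ) = (i:ℕ) ∧ (c:ℕ) = 0
    · rw [if_pos h1, if_pos ⟨(Fin.ext h1.1.symm), (Fin.ext (by simp [this, h1.2]))⟩]
    · rw [if_neg h1, if_neg]
      intro ⟨h2, h3⟩
      exact h1 ⟨by rw [← h2], by rw [← h3]; simp [this]⟩

lemma yMat_eq (n : ℕ) (i : Fin (2*n)) (a : ℝ) :
    yMat n i a = 1 + single (sIdx n i) i (epsc n i * a) := by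
  ext r c
  simp only [yMat, Matrix.add_apply, Matrix.one_apply, single, of_apply, epsc, sIdx]
  have hi := i.isLt
  by_cases h : (i : ℕ) + 1 < 2*n
  · simp only [h, if_true]
    congr 1
    have : ((i:ℕ)+1) % (2*n) = (i:ℕ)+1 := Nat.mod_eq_of_lt h
    by_cases h1 : (r:ℕ) = (i:ℕ)+1 ∧ (c:ℕ) = (i:ℕ)
    · rw [if_pos h1, if_pos ⟨(Fin.ext (by simp [this, h1.1])), (Fin.ext h1.2.symm)⟩, one_mul]
    · rw [if_neg h1, if_neg]
      intro ⟨h2, h3⟩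
      exact h1 ⟨by rw [← h2]; simp [this], by rw [← h3]⟩
  · simp only [h, if_false]
    congr 1
    have h2n : (i:ℕ) + 1 = 2*n := by omega
    have : ((i:ℕ)+1) % (2*n) = 0 := by rw [h2n]; simp
    by_cases h1 : (r:ℕ) = 0 ∧ (c:ℕ) = (i:ℕ)
    · rw [if_pos h1, if_pos ⟨(Fin.ext (by simp [this, h1.1])), (Fin.ext h1.2.symm)⟩]
    · rw [if_neg h1, if_neg]
      intro ⟨h2, h3⟩
      exact h1 ⟨by rw [← h2]; simp [this], by rw [← h3]⟩

lemma Rmat_apply (n : ℕ) (q s : Fin (2*n)) :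
    Rmat n q s = if s = rotIdx n q then rhoc n q else 0 := by
  have hq := q.isLt
  have hs := s.isLt
  simp only [Rmat, rhoc]
  by_cases h : (q : ℕ) < n
  · have hrot : ((q:ℕ)+n) % (2*n) = (q:ℕ)+n := Nat.mod_eq_of_lt (by omega)
    by_cases h1 : (s:ℕ) = (q:ℕ)+n
    · rw [if_pos h1, if_pos (Fin.ext (by simp [rotIdx, hrot, h1])), if_pos h]
    · rw [if_neg h1, if_neg (by omega), if_neg (by intro hc; exact h1 (by simpa [rotIdx, hrot] using congrArg Fin.val hc))]
  · have hn : 0 < n := by omega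
    have hrot : ((q:ℕ)+n) % (2*n) = (q:ℕ)-n := by
      rw [mod2n (by omega), if_neg (by omega)]; omega
    have h1 : ¬ (s:ℕ) = (q:ℕ)+n := by omega
    rw [if_neg h1]
    by_cases h2 : (q:ℕ) = (s:ℕ)+n
    · rw [if_pos h2, if_pos (Fin.ext (by simp [rotIdx, hrot]; omega)), if_neg h]
      congr 2
      omega
    · rw [if_neg h2, if_neg (by intro hc; exact h2 (by have := congrArg Fin.val hc; simp [rotIdx, hrot] at this; omega))]

lemma stdBasis_mul_Rmat (n : ℕ) (p q : Fin (2*n)) (c : ℝ) :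
    single p q c * Rmat n = single p (rotIdx n q) (c * rhoc n q) := by
  ext r s
  simp only [Matrix.mul_apply, single, of_apply]
  rw [Finset.sum_eq_single q]
  · by_cases hp : p = r
    · rw [if_pos ⟨hp, rfl⟩, Rmat_apply]
      by_cases hs : s = rotIdx n q
      · rw [if_pos hs, if_pos ⟨hp, hs.symm⟩]
      · rw [if_neg hs, if_neg (fun hh => hs hh.2.symm), mul_zero]
    · rw [if_neg (fun hh => hp hh.1), zero_mul, if_neg (fun hh => hp hh.1)]
  · intro b _ hb
    rw [if_neg (fun hh => hb hh.2.symm), zero_mul]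
  · simp

lemma Rmat_transpose (n : ℕ) : (Rmat n)ᵀ = -(Rmat n) := by
  ext r c
  have hr := r.isLt
  have hc := c.isLt
  have hn : 0 < n := by omega
  simp only [Matrix.transpose_apply, Matrix.neg_apply, Rmat]
  by_cases h1 : (c:ℕ) = (r:ℕ) + n
  · rw [if_neg (by omega), if_pos h1, if_pos h1]
  · by_cases h2 : (r:ℕ) = (c:ℕ) + n
    · rw [if_pos h2, if_neg h1, if_pos h2, neg_neg]
    · rw [if_neg h2, if_neg h1, if_neg h1, if_neg h2, neg_zero]

lemma transpose_stdBasis (p q : Fin m) (c : ℝ) [DecidableEq (Fin m)] :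
    (single p q c)ᵀ = single q p c := by
  ext r s
  simp only [Matrix.transpose_apply, single, of_apply]
  congr 1
  simp [and_comm]

lemma rot_rot (n : ℕ) (i : Fin (2*n)) : rotIdx n (rotIdx n i) = i := by
  apply Fin.ext
  have hi := i.isLt
  have hn : 0 < n := by omega
  simp only [rotIdx]
  rw [mod2n (n := n) (x := (i:ℕ)+n) (by omega)]
  split_ifs with hc
  · rw [mod2n (by omega), if_neg (by omega)]; omega
  · rw [mod2n (by omega), if_pos (by omega)]; omega

lemma rot_s (n : ℕ) (i : Fin (2*n)) : rotIdx n (sIdx n i) = sIdx n (rotIdx n i) := by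
  apply Fin.ext
  have hi := i.isLt
  have hn : 0 < n := by omega
  simp only [rotIdx, sIdx]
  rw [mod2n (n := n) (x := (i:ℕ)+1) (by omega),
      mod2n (n := n) (x := (i:ℕ)+n) (by omega)]
  split_ifs with c1 c2 c2
  · rw [mod2n (by omega), mod2n (by omega)]
    split_ifs <;> omega
  · rw [mod2n (by omega), mod2n (by omega)]
    split_ifs <;> omega
  · rw [mod2n (by omega), mod2n (by omega)]
    split_ifs <;> omega
  · rw [mod2n (by omega), mod2n (by omega)]
    split_ifs <;> omega

lemma sign_eq (n : ℕ) (i : Fin (2*n)) :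
    epsc n i * rhoc n (sIdx n i) = epsc n (rotIdx n i) * rhoc n (rotIdx n i) := by
  have hi := i.isLt
  have hn : 0 < n := by omega
  simp only [epsc, rhoc, sIdx, rotIdx]
  rcases Nat.lt_or_ge (i:ℕ) (n-1) with h | h
  · -- case 1 : i < n-1
    have e1 : ((i:ℕ)+1) % (2*n) = (i:ℕ)+1 := by rw [mod2n (by omega), if_pos (by omega)]
    have e2 : ((i:ℕ)+n) % (2*n) = (i:ℕ)+n := by rw [mod2n (by omega), if_pos (by omega)]
    simp only [e1, e2]
    rw [if_pos (by omega), if_pos (by omega), if_pos (by omega), if_neg (by omega)]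
    rw [Nat.add_sub_cancel, one_mul, one_mul, pow_succ]
    ring
  rcases Nat.eq_or_lt_of_le h with h' | h'
  · -- case 2 : i = n-1
    have hie : (i:ℕ) = n - 1 := h'.symm
    have e1 : ((i:ℕ)+1) % (2*n) = n := by rw [mod2n (by omega), if_pos (by omega)]; omega
    have e2 : ((i:ℕ)+n) % (2*n) = 2*n-1 := by rw [mod2n (by omega), if_pos (by omega)]; omega
    simp only [e1, e2]
    rw [if_pos (by omega), if_neg (by omega), if_neg (by omega), if_neg (by omega)]
    rw [Nat.sub_self, pow_zero, one_mul]
    rw [show 2*n-1-n = n-1 by omega, mul_neg, ← pow_add]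
    rw [show (n-1)+(n-1) = 2*(n-1) by omega, pow_mul]
    norm_num
  rcases Nat.lt_or_ge (i:ℕ) (2*n-1) with h2 | h2
  · -- case 3 : n ≤ i < 2n-1
    have e1 : ((i:ℕ)+1) % (2*n) = (i:ℕ)+1 := by rw [mod2n (by omega), if_pos (by omega)]
    have e2 : ((i:ℕ)+n) % (2*n) = (i:ℕ)-n := by rw [mod2n (by omega), if_neg (by omega)]; omega
    simp only [e1, e2]
    rw [if_pos (by omega), if_neg (by omega), if_pos (by omega), if_pos (by omega)]
    rw [show (i:ℕ)+1-n = ((i:ℕ)-n)+1 by omega, one_mul, one_mul, pow_succ]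
    ring
  · -- case 4 : i = 2n-1
    have hie : (i:ℕ) = 2*n-1 := by omega
    have e1 : ((i:ℕ)+1) % (2*n) = 0 := by rw [mod2n (by omega), if_neg (by omega)]; omega
    have e2 : ((i:ℕ)+n) % (2*n) = n-1 := by rw [mod2n (by omega), if_neg (by omega)]; omega
    simp only [e1, e2]
    rw [if_neg (by omega), if_pos (by omega), if_pos (by omega), if_pos (by omega)]
    rw [pow_zero]
    ring

lemma ne_rot (n : ℕ) (i : Fin (2*n)) : i ≠ rotIdx n i := by
  have hi := i.isLt
  have hn : 0 < n := by omega
  intro h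
  have := congrArg Fin.val h
  simp only [rotIdx] at this
  rw [mod2n (by omega)] at this
  split at this <;> omega

lemma ne_s (n : ℕ) (i : Fin (2*n)) : i ≠ sIdx n i := by
  have hi := i.isLt
  have hn : 0 < n := by omega
  intro h
  have := congrArg Fin.val h
  simp only [sIdx] at this
  rw [mod2n (by omega)] at this
  split at this <;> omega

lemma s_inj (n : ℕ) {u v : Fin (2*n)} (h : sIdx n u = sIdx n v) : u = v := by
  have hu := u.isLt
  have hv := v.isLt
  have hn : 0 < n := by omega
  apply Fin.ext
  have := congrArg Fin.val h
  simp only [sIdx] at this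
  rw [mod2n (n := n) (x := (u:ℕ)+1) (by omega),
      mod2n (n := n) (x := (v:ℕ)+1) (by omega)] at this
  split at this <;> split at this <;> omega

/-- For every `a ∈ ℝ` and index `i`, the matrix `x_i(a)·y_{i+n}(a)` preserves the form `R`. -/
theorem stmt9 (n : ℕ) (a : ℝ) (i : Fin (2*n)) :
    (xMat n i a * yMat n (rotIdx n i) a) * Rmat n *
      (xMat n i a * yMat n (rotIdx n i) a)ᵀ = Rmat n := by
  set j := rotIdx n i with hj
  set si := sIdx n i with hsi
  set sj := sIdx n j with hsj
  -- distinctness facts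
  have hij : i ≠ j := ne_rot n i
  have hsisj : si ≠ sj := fun h => hij (s_inj n h)
  have hisi : i ≠ si := ne_s n i
  have hjsj : j ≠ sj := ne_s n j
  -- the perturbation matrix
  set B : Matrix (Fin (2*n)) (Fin (2*n)) ℝ :=
    single i si (epsc n i * a) + single sj j (epsc n j * a) with hB
  have hM : xMat n i a * yMat n j a = 1 + B := by
    rw [xMat_eq, yMat_eq, ← hsi, ← hsj]
    have hXY : single i si (epsc n i * a) * single sj j (epsc n j * a) = 0 :=
      Matrix.single_mul_single_of_ne _ _ _ _ hsisj _
    rw [mul_add, mul_one, add_mul, one_mul, hXY, add_zero, hB]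
    abel
  set v : ℝ := epsc n i * a * rhoc n si with hv
  have e1 : rotIdx n si = sj := by rw [hsi, hsj, hj]; exact rot_s n i
  have e2 : rotIdx n j = i := by rw [hj]; exact rot_rot n i
  have e3 : epsc n j * a * rhoc n j = v := by
    rw [hv, hsi, hj]
    linear_combination (-a) * sign_eq n i
  have hBR : B * Rmat n = single i sj v + single sj i v := by
    rw [hB, Matrix.add_mul, stdBasis_mul_Rmat, stdBasis_mul_Rmat, e1, e2, e3, ← hv]
  have hRBt : Rmat n * Bᵀ = -(B * Rmat n) := by
    have h1 : Rmat n * Bᵀ = (B * (Rmat n)ᵀ)ᵀ := by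
      rw [Matrix.transpose_mul, Matrix.transpose_transpose]
    rw [h1, Rmat_transpose, Matrix.mul_neg, Matrix.transpose_neg]
    congr 1
    rw [hBR, Matrix.transpose_add, transpose_stdBasis, transpose_stdBasis]
    abel
  have hBRBt : B * Rmat n * Bᵀ = 0 := by
    have z1 : single i sj v * single si i (epsc n i * a) = 0 :=
      Matrix.single_mul_single_of_ne _ _ _ _ (fun h => hsisj h.symm) _
    have z2 : single i sj v * single j sj (epsc n j * a) = 0 :=
      Matrix.single_mul_single_of_ne _ _ _ _ (fun h => hjsj h.symm) _
    have z3 : single sj i v * single si i (epsc n i * a) = 0 :=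
      Matrix.single_mul_single_of_ne _ _ _ _ hisi _
    have z4 : single sj i v * single j sj (epsc n j * a) = 0 :=
      Matrix.single_mul_single_of_ne _ _ _ _ hij _
    rw [hBR, hB, Matrix.transpose_add, transpose_stdBasis, transpose_stdBasis,
        Matrix.add_mul, Matrix.mul_add, Matrix.mul_add, z1, z2, z3, z4]
    simp
  have expand : (1+B) * Rmat n * (1+B)ᵀ
      = Rmat n + B * Rmat n + Rmat n * Bᵀ + B * Rmat n * Bᵀ := by
    rw [Matrix.transpose_add, Matrix.transpose_one]
    noncomm_ring
  rw [hM, expand, hRBt, hBRBt]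
  abel
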